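/- Let Φ₁ ≠ Φ₂ be quantum channels from d×d complex matrices to m×m complex matrices, let Δ = Φ₁ − Φ₂, and suppose there is a unit vector φ ∈ ℂ^d such that M(Δ) = ‖J(Δ)‖₁ · φφᴴ. Then for every density matrix σ on ℂ^d one has ‖(1_m ⊗ √σ)·J(Δ)·(1_m ⊗ √σ)‖₁ = ⟨φ, σφ⟩ · ‖J(Δ)‖₁; consequently ‖Δ‖_⋄ = ‖J(Δ)‖₁ = d·‖Δ‖_ME, the supremum defining ‖Δ‖_⋄ is attained at σ = φφᴴ, and every density matrix σ with σ ≠ φφᴴ gives a value strictly smaller than ‖Δ‖_⋄. -/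

import Mathlib

open Matrix Kronecker ComplexOrder

noncomputable section

/-- The positive semidefinite square root of a PSD matrix, as `Matrix.PosSemidef.sqrt` was
defined in the older Mathlib (removed since). -/
noncomputable def Matrix.PosSemidef.sqrt {𝕜 : Type*} [RCLike 𝕜] {n : Type*} [Fintype n]
    [DecidableEq n] {A : Matrix n n 𝕜} (hA : A.PosSemidef) : Matrix n n 𝕜 :=
  hA.1.eigenvectorUnitary.1 * diagonal ((↑) ∘ (√·) ∘ hA.1.eigenvalues) *
    (star hA.1.eigenvectorUnitary : Matrix n n 𝕜)

/-- The matrix absolute value `|A| = √(AᴴA)`. -/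
noncomputable def matAbs {n : Type*} [Fintype n] [DecidableEq n] (A : Matrix n n ℂ) :
    Matrix n n ℂ :=
  (Matrix.posSemidef_conjTranspose_mul_self A).sqrt

/-- The trace norm `‖A‖₁ = Tr √(AᴴA)`. -/
noncomputable def traceNorm {n : Type*} [Fintype n] [DecidableEq n] (A : Matrix n n ℂ) : ℝ :=
  ((matAbs A).trace).re

/-- The positive semidefinite square root of a PSD matrix (zero otherwise). -/
noncomputable def matSqrt {n : Type*} [Fintype n] [DecidableEq n] (σ : Matrix n n ℂ) :
    Matrix n n ℂ :=
  open scoped Classical in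
  if h : σ.PosSemidef then h.sqrt else 0

/-- A density matrix: positive semidefinite with unit trace. -/
def IsDensity {n : Type*} [Fintype n] [DecidableEq n] (σ : Matrix n n ℂ) : Prop :=
  σ.PosSemidef ∧ σ.trace = 1

/-- The Choi operator of a linear map between matrix algebras. -/
noncomputable def choi {d m : ℕ}
    (S : Matrix (Fin d) (Fin d) ℂ →ₗ[ℂ] Matrix (Fin m) (Fin m) ℂ) :
    Matrix (Fin m × Fin d) (Fin m × Fin d) ℂ :=
  ∑ i : Fin d, ∑ j : Fin d,
    (S (Matrix.single i j 1)) ⊗ₖ (Matrix.single i j 1)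

/-- The ME-norm `‖S‖_ME = ‖J(S)‖₁ / d`. -/
noncomputable def MENorm {d m : ℕ}
    (S : Matrix (Fin d) (Fin d) ℂ →ₗ[ℂ] Matrix (Fin m) (Fin m) ℂ) : ℝ :=
  traceNorm (choi S) / d

/-- The diamond norm: supremum over density matrices σ of
`‖(1 ⊗ √σ) J(S) (1 ⊗ √σ)‖₁`. -/
noncomputable def diamondNorm {d m : ℕ}
    (S : Matrix (Fin d) (Fin d) ℂ →ₗ[ℂ] Matrix (Fin m) (Fin m) ℂ) : ℝ :=
  ⨆ σ : {σ : Matrix (Fin d) (Fin d) ℂ // IsDensity σ},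
    traceNorm (((1 : Matrix (Fin m) (Fin m) ℂ) ⊗ₖ matSqrt σ.1) * choi S *
      ((1 : Matrix (Fin m) (Fin m) ℂ) ⊗ₖ matSqrt σ.1))

/-- The M-operator `M(S) = Tr_B |J(S)|`. -/
noncomputable def Mop {d m : ℕ}
    (S : Matrix (Fin d) (Fin d) ℂ →ₗ[ℂ] Matrix (Fin m) (Fin m) ℂ) :
    Matrix (Fin d) (Fin d) ℂ :=
  Matrix.of fun k l => ∑ b : Fin m, matAbs (choi S) (b, k) (b, l)

/-- A quantum channel: completely positive (PSD Choi operator, by Choi's theorem)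
and trace preserving. -/
def IsQChannel {d m : ℕ}
    (S : Matrix (Fin d) (Fin d) ℂ →ₗ[ℂ] Matrix (Fin m) (Fin m) ℂ) : Prop :=
  (choi S).PosSemidef ∧ ∀ ρ : Matrix (Fin d) (Fin d) ℂ, (S ρ).trace = ρ.trace


namespace Matrix.PosSemidef

open scoped MatrixOrder in
lemma spec_nonneg' {n : Type*} [Fintype n] [DecidableEq n] {A : Matrix n n ℂ}
    (hA : A.PosSemidef) : ∀ x ∈ spectrum ℝ A, 0 ≤ x :=
  fun _ hx => spectrum_nonneg_of_nonneg (Matrix.nonneg_iff_posSemidef.mpr hA) hx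

lemma sqrt_eq_cfc {n : Type*} [Fintype n] [DecidableEq n] {A : Matrix n n ℂ}
    (hA : A.PosSemidef) : hA.sqrt = cfc Real.sqrt A := by
  rw [hA.1.cfc_eq, IsHermitian.cfc, Unitary.conjStarAlgAut_apply]
  rfl

lemma sqrt_mul_self {n : Type*} [Fintype n] [DecidableEq n] {A : Matrix n n ℂ}
    (hA : A.PosSemidef) : hA.sqrt * hA.sqrt = A := by
  rw [sqrt_eq_cfc, ← cfc_mul Real.sqrt Real.sqrt A]
  conv_rhs => rw [← cfc_id ℝ A hA.1.isSelfAdjoint]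
  exact cfc_congr fun x hx => Real.mul_self_sqrt (spec_nonneg' hA x hx)

open scoped MatrixOrder in
lemma posSemidef_sqrt {n : Type*} [Fintype n] [DecidableEq n] {A : Matrix n n ℂ}
    (hA : A.PosSemidef) : hA.sqrt.PosSemidef := by
  rw [sqrt_eq_cfc]
  exact Matrix.nonneg_iff_posSemidef.mp (cfc_nonneg fun x _ => Real.sqrt_nonneg x)

lemma eq_sqrt_of_sq_eq {n : Type*} [Fintype n] [DecidableEq n] {B : Matrix n n ℂ}
    (hB : B.PosSemidef) {A : Matrix n n ℂ} (hA : A.PosSemidef) (h : B ^ 2 = A) :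
    B = hA.sqrt := by
  have e : B ^ 2 = cfc (fun x : ℝ => x ^ 2) B := (cfc_pow_id B 2 hB.1.isSelfAdjoint).symm
  rw [sqrt_eq_cfc, ← h, e, ← cfc_comp Real.sqrt (fun x : ℝ => x ^ 2) B hB.1.isSelfAdjoint]
  conv_lhs => rw [← cfc_id ℝ B hB.1.isSelfAdjoint]
  exact cfc_congr fun x hx => (Real.sqrt_sq (spec_nonneg' hB x hx)).symm

end Matrix.PosSemidef

namespace Stmt4Aux

set_option linter.unusedSectionVars false

variable {n m' : Type*} [Fintype n] [DecidableEq n] [Fintype m'] [DecidableEq m']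

lemma trace_ctms (A : Matrix n n ℂ) :
    (Aᴴ * A).trace = ((∑ j, ∑ i, Complex.normSq (A i j) : ℝ) : ℂ) := by
  simp only [Matrix.trace, Matrix.diag, Matrix.mul_apply, Matrix.conjTranspose_apply]
  push_cast
  refine Finset.sum_congr rfl fun j _ => Finset.sum_congr rfl fun i _ => ?_
  rw [Complex.normSq_eq_conj_mul_self]
  rfl

lemma ctms_trace_zero {A : Matrix n n ℂ} (h : (Aᴴ * A).trace = 0) : A = 0 := by
  rw [trace_ctms] at h
  have h2 : (∑ j, ∑ i, Complex.normSq (A i j) : ℝ) = 0 := by exact_mod_cast h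
  ext i j
  have := (Finset.sum_eq_zero_iff_of_nonneg (fun j _ => Finset.sum_nonneg
    (fun i _ => Complex.normSq_nonneg _))).mp h2 j (Finset.mem_univ j)
  have := (Finset.sum_eq_zero_iff_of_nonneg (fun i _ => Complex.normSq_nonneg _)).mp
    this i (Finset.mem_univ i)
  simpa [Complex.normSq_eq_zero] using this

lemma psd_eq_sqrt_conj_mul {A : Matrix n n ℂ} (hA : A.PosSemidef) :
    A = hA.sqrtᴴ * hA.sqrt := by
  conv_lhs => rw [← hA.sqrt_mul_self]
  rw [hA.posSemidef_sqrt.1.eq]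

lemma psd_trace_zero {A : Matrix n n ℂ} (hA : A.PosSemidef) (h : A.trace = 0) : A = 0 := by
  have h2 : (hA.sqrtᴴ * hA.sqrt).trace = 0 := by rw [← psd_eq_sqrt_conj_mul hA]; exact h
  have h3 := ctms_trace_zero h2
  rw [psd_eq_sqrt_conj_mul hA, h3]
  simp

lemma psd_trace_re {A : Matrix n n ℂ} (hA : A.PosSemidef) :
    A.trace = ((A.trace.re : ℝ) : ℂ) ∧ 0 ≤ A.trace.re := by
  have := psd_eq_sqrt_conj_mul hA
  rw [this, trace_ctms]
  constructor
  · norm_num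
  · simp only [Complex.ofReal_re]
    exact Finset.sum_nonneg fun j _ => Finset.sum_nonneg fun i _ => Complex.normSq_nonneg _

lemma psd_trace_pos {A : Matrix n n ℂ} (hA : A.PosSemidef) (h : A ≠ 0) : 0 < A.trace.re := by
  rcases lt_or_eq_of_le (psd_trace_re hA).2 with h' | h'
  · exact h'
  · exact absurd (psd_trace_zero hA (by rw [(psd_trace_re hA).1, ← h']; simp)) h

lemma kron_conjT (A : Matrix m' m' ℂ) (B : Matrix n n ℂ) :
    (A ⊗ₖ B)ᴴ = Aᴴ ⊗ₖ Bᴴ := by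
  ext ⟨a, b⟩ ⟨c, d⟩
  simp [Matrix.conjTranspose_apply, kroneckerMap_apply, mul_comm]

lemma one_kron_sub (B C : Matrix n n ℂ) :
    (1 : Matrix m' m' ℂ) ⊗ₖ (B - C) = (1 : Matrix m' m' ℂ) ⊗ₖ B - (1 : Matrix m' m' ℂ) ⊗ₖ C := by
  ext ⟨a, b⟩ ⟨c, d⟩
  simp [kroneckerMap_apply, Matrix.sub_apply, mul_sub]

lemma psd_mul_psd_trace_zero {A B : Matrix n n ℂ} (hA : A.PosSemidef) (hB : B.PosSemidef)
    (h : (A * B).trace = 0) : A * B = 0 := by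
  set a := hA.sqrt with ha
  set b := hB.sqrt with hb
  have haa : a * a = A := hA.sqrt_mul_self
  have hbb : b * b = B := hB.sqrt_mul_self
  have hah : aᴴ = a := hA.posSemidef_sqrt.1.eq
  have hbh : bᴴ = b := hB.posSemidef_sqrt.1.eq
  have key : ((b * a)ᴴ * (b * a)).trace = 0 := by
    have : (b * a)ᴴ * (b * a) = a * (B * a) := by
      rw [conjTranspose_mul, hah, hbh, ← hbb]; simp only [Matrix.mul_assoc]
    rw [this, Matrix.trace_mul_comm, Matrix.mul_assoc, haa, Matrix.trace_mul_comm, h]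
  have hba : b * a = 0 := ctms_trace_zero key
  have hab : a * b = 0 := by
    have := congrArg Matrix.conjTranspose hba
    simpa [conjTranspose_mul, hah, hbh] using this
  calc A * B = a * (a * b * b) := by rw [← haa, ← hbb]; simp only [Matrix.mul_assoc]
  _ = 0 := by rw [hab]; simp

lemma P_herm (φ : n → ℂ) : (Matrix.vecMulVec φ (star φ))ᴴ = Matrix.vecMulVec φ (star φ) := by
  ext i j
  simp [Matrix.conjTranspose_apply, Matrix.vecMulVec_apply, mul_comm]

lemma P_mul_P {φ : n → ℂ} (hφ : star φ ⬝ᵥ φ = 1) :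
    Matrix.vecMulVec φ (star φ) * Matrix.vecMulVec φ (star φ) = Matrix.vecMulVec φ (star φ) := by
  ext i j
  simp only [Matrix.mul_apply, Matrix.vecMulVec_apply, Pi.star_apply]
  calc ∑ a, φ i * star (φ a) * (φ a * star (φ j))
      = (φ i * star (φ j)) * ∑ a, star (φ a) * φ a := by
        rw [Finset.mul_sum]; exact Finset.sum_congr rfl fun a _ => by ring
    _ = φ i * star (φ j) := by
        have : ∑ a, star (φ a) * φ a = 1 := hφ
        rw [this, mul_one]

lemma P_trace {φ : n → ℂ} (hφ : star φ ⬝ᵥ φ = 1) : (Matrix.vecMulVec φ (star φ)).trace = 1 := by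
  simp only [Matrix.trace, Matrix.diag_apply, Matrix.vecMulVec_apply, Pi.star_apply]
  rw [← hφ]
  exact Finset.sum_congr rfl fun a _ => by simp [Pi.star_apply]; ring

lemma P_mulVec (φ : n → ℂ) (x : n → ℂ) :
    Matrix.vecMulVec φ (star φ) *ᵥ x = (star φ ⬝ᵥ x) • φ := by
  ext i
  simp only [Matrix.mulVec, Matrix.vecMulVec_apply, dotProduct, Pi.smul_apply,
    smul_eq_mul, Pi.star_apply]
  rw [Finset.sum_mul]
  exact Finset.sum_congr rfl fun a _ => by ring

lemma P_psd (φ : n → ℂ) : (Matrix.vecMulVec φ (star φ)).PosSemidef := by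
  refine Matrix.PosSemidef.of_dotProduct_mulVec_nonneg (P_herm φ) fun x => ?_
  rw [P_mulVec, dotProduct_smul, smul_eq_mul]
  have h2 : star x ⬝ᵥ φ = star (star φ ⬝ᵥ x) := by
    simp [dotProduct, Finset.sum_comm, mul_comm]
  rw [h2]
  exact mul_star_self_nonneg _

lemma P_sandwich {φ : n → ℂ} (σ : Matrix n n ℂ) :
    Matrix.vecMulVec φ (star φ) * σ * Matrix.vecMulVec φ (star φ)
      = (star φ ⬝ᵥ σ *ᵥ φ) • Matrix.vecMulVec φ (star φ) := by
  ext i j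
  simp only [Matrix.mul_apply, Matrix.vecMulVec_apply, Pi.star_apply, Matrix.smul_apply,
    smul_eq_mul, dotProduct, Matrix.mulVec, Finset.sum_mul, Finset.mul_sum]
  rw [Finset.sum_comm]
  refine Finset.sum_congr rfl fun a _ => Finset.sum_congr rfl fun b _ => by ring

lemma trace_mul_P {φ : n → ℂ} (σ : Matrix n n ℂ) :
    (σ * Matrix.vecMulVec φ (star φ)).trace = star φ ⬝ᵥ σ *ᵥ φ := by
  simp only [Matrix.trace, Matrix.diag_apply, Matrix.mul_apply, Matrix.vecMulVec_apply,
    Pi.star_apply, dotProduct, Matrix.mulVec, Finset.mul_sum]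
  refine Finset.sum_congr rfl fun a _ => Finset.sum_congr rfl fun b _ => by ring

lemma phi_P_phi {φ : n → ℂ} (hφ : star φ ⬝ᵥ φ = 1) :
    star φ ⬝ᵥ Matrix.vecMulVec φ (star φ) *ᵥ φ = 1 := by
  rw [← trace_mul_P (Matrix.vecMulVec φ (star φ)), P_mul_P hφ, P_trace hφ]

lemma trace_mul_eq (A B : Matrix n n ℂ) :
    (A * B).trace = ∑ k, ∑ l, A k l * B l k := by
  simp [Matrix.trace, Matrix.diag, Matrix.mul_apply]

lemma trace_mul_one_kron {d m : ℕ} (R : Matrix (Fin m × Fin d) (Fin m × Fin d) ℂ)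
    (Q : Matrix (Fin d) (Fin d) ℂ) :
    (R * ((1 : Matrix (Fin m) (Fin m) ℂ) ⊗ₖ Q)).trace
      = ∑ k, ∑ l, (∑ b, R (b, k) (b, l)) * Q l k := by
  simp only [Matrix.trace, Matrix.diag_apply, Matrix.mul_apply, kroneckerMap_apply,
    Matrix.one_apply, Fintype.sum_prod_type, Finset.sum_mul, ite_mul, one_mul, zero_mul,
    Finset.sum_ite_irrel, Finset.sum_const_zero, mul_ite, mul_zero]
  simp only [Finset.sum_ite_eq, Finset.sum_ite_eq', Finset.mem_univ, if_true]
  rw [Finset.sum_comm]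
  exact Finset.sum_congr rfl fun k _ => Finset.sum_comm

lemma sbm_apply {d : ℕ} (i j k l : Fin d) :
    Matrix.single i j (1:ℂ) k l = if i = k ∧ j = l then 1 else 0 := rfl

lemma choi_apply {d m : ℕ} (S : Matrix (Fin d) (Fin d) ℂ →ₗ[ℂ] Matrix (Fin m) (Fin m) ℂ)
    (b b' : Fin m) (k k' : Fin d) :
    choi S (b, k) (b', k') = S (Matrix.single k k' 1) b b' := by
  simp only [choi, Matrix.sum_apply, kroneckerMap_apply, sbm_apply,
    mul_ite, mul_one, mul_zero]
  simp only [ite_and, Finset.sum_ite_eq', Finset.sum_ite_eq, Finset.sum_ite_irrel,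
    Finset.sum_const_zero, Finset.mem_univ, if_true]

lemma choi_sub {d m : ℕ} (S T : Matrix (Fin d) (Fin d) ℂ →ₗ[ℂ] Matrix (Fin m) (Fin m) ℂ) :
    choi (S - T) = choi S - choi T := by
  ext ⟨b, k⟩ ⟨b', k'⟩
  simp [choi_apply, Matrix.sub_apply]

lemma choi_eq_zero {d m : ℕ} {S : Matrix (Fin d) (Fin d) ℂ →ₗ[ℂ] Matrix (Fin m) (Fin m) ℂ}
    (h : choi S = 0) : S = 0 := by
  have hE : ∀ i j, S (Matrix.single i j 1) = 0 := by
    intro i j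
    ext b b'
    have := congrFun (congrFun h (b, i)) (b', j)
    rw [choi_apply] at this
    simpa using this
  apply LinearMap.ext
  intro x
  rw [LinearMap.zero_apply]
  conv_lhs => rw [Matrix.matrix_eq_sum_single x]
  rw [map_sum]
  refine Finset.sum_eq_zero fun i _ => ?_
  rw [map_sum]
  refine Finset.sum_eq_zero fun j _ => ?_
  have h5 : Matrix.single i j (x i j) = x i j • Matrix.single i j (1:ℂ) := by
    rw [Matrix.smul_single, smul_eq_mul, mul_one]
  rw [h5, LinearMap.map_smul, hE, smul_zero]

end Stmt4Aux


set_option maxHeartbeats 2000000 in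
/-- if `M(Δ) = ‖J(Δ)‖₁ · φφᴴ` for channels `Φ₁ ≠ Φ₂` and a unit
vector `φ`, then every density matrix `σ` gives value `⟨φ, σφ⟩·‖J(Δ)‖₁`;
consequently `‖Δ‖_⋄ = ‖J(Δ)‖₁ = d·‖Δ‖_ME`, the supremum is attained at
`σ = φφᴴ`, and every other density matrix is strictly suboptimal. -/
theorem stmt4 {d m : ℕ} (hd : 1 ≤ d)
    (Phi1 Phi2 : Matrix (Fin d) (Fin d) ℂ →ₗ[ℂ] Matrix (Fin m) (Fin m) ℂ)
    (h1 : IsQChannel Phi1) (h2 : IsQChannel Phi2) (hne : Phi1 ≠ Phi2)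
    (Delta : Matrix (Fin d) (Fin d) ℂ →ₗ[ℂ] Matrix (Fin m) (Fin m) ℂ)
    (hDelta : Delta = Phi1 - Phi2)
    (phi : Fin d → ℂ) (hphi : star phi ⬝ᵥ phi = 1)
    (hM : Mop Delta = (traceNorm (choi Delta) : ℂ) • Matrix.vecMulVec phi (star phi)) :
    (∀ σ : Matrix (Fin d) (Fin d) ℂ, IsDensity σ →
      traceNorm (((1 : Matrix (Fin m) (Fin m) ℂ) ⊗ₖ matSqrt σ) * choi Delta *
          ((1 : Matrix (Fin m) (Fin m) ℂ) ⊗ₖ matSqrt σ))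
        = (star phi ⬝ᵥ σ *ᵥ phi).re * traceNorm (choi Delta))
    ∧ diamondNorm Delta = traceNorm (choi Delta)
    ∧ diamondNorm Delta = d * MENorm Delta
    ∧ traceNorm (((1 : Matrix (Fin m) (Fin m) ℂ) ⊗ₖ
          matSqrt (Matrix.vecMulVec phi (star phi))) * choi Delta *
        ((1 : Matrix (Fin m) (Fin m) ℂ) ⊗ₖ matSqrt (Matrix.vecMulVec phi (star phi))))
        = diamondNorm Delta
    ∧ ∀ σ : Matrix (Fin d) (Fin d) ℂ, IsDensity σ →
        σ ≠ Matrix.vecMulVec phi (star phi) →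
        traceNorm (((1 : Matrix (Fin m) (Fin m) ℂ) ⊗ₖ matSqrt σ) * choi Delta *
            ((1 : Matrix (Fin m) (Fin m) ℂ) ⊗ₖ matSqrt σ))
          < diamondNorm Delta := by
  classical
  open Stmt4Aux in
  haveI : Nonempty (Fin d) := ⟨⟨0, hd⟩⟩
  set P : Matrix (Fin d) (Fin d) ℂ := Matrix.vecMulVec phi (star phi) with hPdef
  set J : Matrix (Fin m × Fin d) (Fin m × Fin d) ℂ := choi Delta with hJdef
  set R : Matrix (Fin m × Fin d) (Fin m × Fin d) ℂ := matAbs J with hRdef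
  set N : ℝ := traceNorm J with hNdef
  have hRpsd : R.PosSemidef := (Matrix.posSemidef_conjTranspose_mul_self J).posSemidef_sqrt
  have hRh : Rᴴ = R := hRpsd.1
  have hRR : R * R = Jᴴ * J := (Matrix.posSemidef_conjTranspose_mul_self J).sqrt_mul_self
  have hJh : Jᴴ = J := by
    rw [hJdef, hDelta, Stmt4Aux.choi_sub, Matrix.conjTranspose_sub, h1.1.1.eq, h2.1.1.eq]
  have hJJ : R * R = J * J := by rw [hRR, hJh]
  have hNc : R.trace = ((N : ℝ) : ℂ) := (Stmt4Aux.psd_trace_re hRpsd).1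
  have hMe : ∀ k l, (∑ b, R (b, k) (b, l)) = ((N : ℝ) : ℂ) * (phi k * star (phi l)) := by
    intro k l
    have h0 := congrFun (congrFun hM k) l
    simpa [Mop, Matrix.smul_apply, Matrix.vecMulVec_apply, smul_eq_mul, Pi.star_apply,
      mul_assoc, hPdef, hRdef, hJdef] using h0
  have hPh : Pᴴ = P := Stmt4Aux.P_herm phi
  have hPP : P * P = P := Stmt4Aux.P_mul_P hphi
  have hPtr : P.trace = 1 := Stmt4Aux.P_trace hphi
  have hPpsd : P.PosSemidef := Stmt4Aux.P_psd phi
  set Q : Matrix (Fin d) (Fin d) ℂ := 1 - P with hQdef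
  have hQh : Qᴴ = Q := by rw [hQdef, Matrix.conjTranspose_sub, Matrix.conjTranspose_one, hPh]
  have hQQ : Q * Q = Q := by
    rw [hQdef]
    simp only [Matrix.mul_sub, Matrix.sub_mul, mul_one, one_mul, hPP]
    abel
  have hQpsd : Q.PosSemidef := by
    have h0 : Q = Qᴴ * Q := by rw [hQh, hQQ]
    rw [h0]; exact Matrix.posSemidef_conjTranspose_mul_self Q
  set K : Matrix (Fin m × Fin d) (Fin m × Fin d) ℂ := (1 : Matrix (Fin m) (Fin m) ℂ) ⊗ₖ P
    with hKdef
  set L : Matrix (Fin m × Fin d) (Fin m × Fin d) ℂ := (1 : Matrix (Fin m) (Fin m) ℂ) ⊗ₖ Q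
    with hLdef
  have hKh : Kᴴ = K := by
    rw [hKdef, Stmt4Aux.kron_conjT, Matrix.conjTranspose_one, hPh]
  have hLh : Lᴴ = L := by
    rw [hLdef, Stmt4Aux.kron_conjT, Matrix.conjTranspose_one, hQh]
  have hLL : L * L = L := by rw [hLdef, ← Matrix.mul_kronecker_mul, one_mul, hQQ]
  have hLpsd : L.PosSemidef := by
    have h0 : L = Lᴴ * L := by rw [hLh, hLL]
    rw [h0]; exact Matrix.posSemidef_conjTranspose_mul_self L
  have htrRL : (R * L).trace = 0 := by
    rw [hLdef, Stmt4Aux.trace_mul_one_kron]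
    calc ∑ k, ∑ l, (∑ b, R (b, k) (b, l)) * Q l k
        = ((N : ℝ) : ℂ) * ∑ k, ∑ l, P k l * Q l k := by
          rw [Finset.mul_sum]
          refine Finset.sum_congr rfl fun k _ => ?_
          rw [Finset.mul_sum]
          refine Finset.sum_congr rfl fun l _ => ?_
          rw [hMe k l, hPdef]
          simp only [Matrix.vecMulVec_apply, Pi.star_apply]
          ring
      _ = ((N : ℝ) : ℂ) * (P * Q).trace := by rw [Stmt4Aux.trace_mul_eq]
      _ = 0 := by
          rw [hQdef, Matrix.mul_sub, mul_one, hPP]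
          simp
  have hRL : R * L = 0 := Stmt4Aux.psd_mul_psd_trace_zero hRpsd hLpsd htrRL
  have hLR : L * R = 0 := by
    have h0 := congrArg Matrix.conjTranspose hRL
    simpa [Matrix.conjTranspose_mul, hRh, hLh] using h0
  have hLK : L = 1 - K := by
    rw [hLdef, hQdef, Stmt4Aux.one_kron_sub, Matrix.one_kronecker_one, hKdef]
  have hRK : R * K = R := by
    have h0 := hRL
    rw [hLK, Matrix.mul_sub, mul_one, sub_eq_zero] at h0
    exact h0.symm
  have hKR : K * R = R := by
    have h0 := congrArg Matrix.conjTranspose hRK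
    rwa [Matrix.conjTranspose_mul, hKh, hRh] at h0
  have hJL : J * L = 0 := by
    apply Matrix.conjTranspose_mul_self_eq_zero.mp
    rw [Matrix.conjTranspose_mul, hLh]
    calc L * Jᴴ * (J * L) = L * (Jᴴ * J) * L := by simp only [Matrix.mul_assoc]
      _ = (L * R) * (R * L) := by rw [← hRR]; simp only [Matrix.mul_assoc]
      _ = 0 := by rw [hRL, hLR]; simp
  have hJK : J * K = J := by
    have h0 := hJL
    rw [hLK, Matrix.mul_sub, mul_one, sub_eq_zero] at h0
    exact h0.symm
  have hKJ : K * J = J := by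
    have h0 := congrArg Matrix.conjTranspose hJK
    rwa [Matrix.conjTranspose_mul, hKh, hJh] at h0
  -- Part 1
  have part1 : ∀ σ : Matrix (Fin d) (Fin d) ℂ, IsDensity σ →
      traceNorm (((1 : Matrix (Fin m) (Fin m) ℂ) ⊗ₖ matSqrt σ) * J *
          ((1 : Matrix (Fin m) (Fin m) ℂ) ⊗ₖ matSqrt σ))
        = (star phi ⬝ᵥ σ *ᵥ phi).re * N := by
    intro σ hσ
    set s : Matrix (Fin d) (Fin d) ℂ := matSqrt σ with hsdef
    have hs : s = hσ.1.sqrt := by rw [hsdef, matSqrt, dif_pos hσ.1]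
    have hss : s * s = σ := by rw [hs]; exact hσ.1.sqrt_mul_self
    have hsh : sᴴ = s := by rw [hs]; exact hσ.1.posSemidef_sqrt.1
    set z : ℂ := star phi ⬝ᵥ σ *ᵥ phi with hzdef
    have hz0 : 0 ≤ z := hσ.1.dotProduct_mulVec_nonneg phi
    obtain ⟨hzre, hzim⟩ := Complex.nonneg_iff.mp hz0
    have hzaux : z = ((z.re : ℝ) : ℂ) := Complex.ext rfl hzim.symm
    set W : Matrix (Fin m × Fin d) (Fin m × Fin d) ℂ :=
      (1 : Matrix (Fin m) (Fin m) ℂ) ⊗ₖ (s * P) with hWdef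
    have hWc : Wᴴ = (1 : Matrix (Fin m) (Fin m) ℂ) ⊗ₖ (P * s) := by
      rw [hWdef, Stmt4Aux.kron_conjT, Matrix.conjTranspose_one, Matrix.conjTranspose_mul,
        hsh, hPh]
    have hW1 : ((1 : Matrix (Fin m) (Fin m) ℂ) ⊗ₖ s) * K = W := by
      rw [hKdef, hWdef, ← Matrix.mul_kronecker_mul, one_mul]
    have hW2 : K * ((1 : Matrix (Fin m) (Fin m) ℂ) ⊗ₖ s) = Wᴴ := by
      rw [hKdef, hWc, ← Matrix.mul_kronecker_mul, one_mul]
    have hsand : W * J * Wᴴ = ((1 : Matrix (Fin m) (Fin m) ℂ) ⊗ₖ s) * J *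
        ((1 : Matrix (Fin m) (Fin m) ℂ) ⊗ₖ s) := by
      rw [← hW2, ← hW1]
      calc (((1 : Matrix (Fin m) (Fin m) ℂ) ⊗ₖ s) * K) * J *
            (K * ((1 : Matrix (Fin m) (Fin m) ℂ) ⊗ₖ s))
          = ((1 : Matrix (Fin m) (Fin m) ℂ) ⊗ₖ s) * (K * J * K) *
            ((1 : Matrix (Fin m) (Fin m) ℂ) ⊗ₖ s) := by simp only [Matrix.mul_assoc]
        _ = _ := by rw [hKJ, hJK]
    have hPsP : (P * s) * (s * P) = z • P := by
      calc (P * s) * (s * P) = P * (s * s) * P := by simp only [Matrix.mul_assoc]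
        _ = P * σ * P := by rw [hss]
        _ = z • P := by rw [hPdef, hzdef]; exact Stmt4Aux.P_sandwich σ
    have hWW : Wᴴ * W = z • K := by
      rw [hWc, hWdef, ← Matrix.mul_kronecker_mul, one_mul, hPsP, Matrix.kronecker_smul, hKdef]
    have hWRWpsd : (W * R * Wᴴ).PosSemidef := hRpsd.mul_mul_conjTranspose_same W
    have hsq : (W * R * Wᴴ) ^ 2 = (W * J * Wᴴ)ᴴ * (W * J * Wᴴ) := by
      have hconj : (W * J * Wᴴ)ᴴ = W * Jᴴ * Wᴴ := by
        simp only [Matrix.conjTranspose_mul, Matrix.conjTranspose_conjTranspose,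
          Matrix.mul_assoc]
      rw [hconj, hJh, pow_two]
      calc (W * R * Wᴴ) * (W * R * Wᴴ)
          = W * (R * (Wᴴ * W) * R) * Wᴴ := by simp only [Matrix.mul_assoc]
        _ = W * (R * (z • K) * R) * Wᴴ := by rw [hWW]
        _ = z • (W * (R * K * R) * Wᴴ) := by
            simp only [Matrix.mul_smul, Matrix.smul_mul, Matrix.mul_assoc]
        _ = z • (W * (R * R) * Wᴴ) := by rw [hRK]
        _ = z • (W * (J * J) * Wᴴ) := by rw [hJJ]
        _ = z • (W * (J * K * J) * Wᴴ) := by rw [hJK]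
        _ = W * (J * (z • K) * J) * Wᴴ := by
            simp only [Matrix.mul_smul, Matrix.smul_mul, Matrix.mul_assoc]
        _ = W * (J * (Wᴴ * W) * J) * Wᴴ := by rw [hWW]
        _ = (W * J * Wᴴ) * (W * J * Wᴴ) := by simp only [Matrix.mul_assoc]
    have habs : matAbs (W * J * Wᴴ) = W * R * Wᴴ :=
      (hWRWpsd.eq_sqrt_of_sq_eq (Matrix.posSemidef_conjTranspose_mul_self (W * J * Wᴴ))
        hsq).symm
    have htr : (W * R * Wᴴ).trace = ((z.re : ℝ) : ℂ) * ((N : ℝ) : ℂ) := by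
      rw [Matrix.trace_mul_cycle, hWW, Matrix.smul_mul, Matrix.trace_smul, hKR, hNc,
        smul_eq_mul, ← hzaux]
    calc traceNorm (((1 : Matrix (Fin m) (Fin m) ℂ) ⊗ₖ matSqrt σ) * J *
          ((1 : Matrix (Fin m) (Fin m) ℂ) ⊗ₖ matSqrt σ))
        = ((matAbs (W * J * Wᴴ)).trace).re := by rw [hsand]; rfl
      _ = z.re * N := by rw [habs, htr, ← Complex.ofReal_mul, Complex.ofReal_re]
  -- N > 0
  have hD0 : Delta ≠ 0 := by
    intro h0
    apply hne
    rw [hDelta] at h0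
    exact sub_eq_zero.mp h0
  have hJ0 : J ≠ 0 := fun h0 => hD0 (Stmt4Aux.choi_eq_zero h0)
  have hR0 : R ≠ 0 := by
    intro h0
    apply hJ0
    apply Matrix.conjTranspose_mul_self_eq_zero.mp
    rw [← hRR, h0, mul_zero]
  have hNpos : 0 < N := Stmt4Aux.psd_trace_pos hRpsd hR0
  -- key bound
  have keyb : ∀ σ : Matrix (Fin d) (Fin d) ℂ, IsDensity σ →
      (star phi ⬝ᵥ σ *ᵥ phi).re ≤ 1 ∧ ((star phi ⬝ᵥ σ *ᵥ phi).re = 1 → σ = P) := by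
    intro σ hσ
    set z : ℂ := star phi ⬝ᵥ σ *ᵥ phi with hzdef
    obtain ⟨hzre, hzim⟩ := Complex.nonneg_iff.mp (hσ.1.dotProduct_mulVec_nonneg phi)
    set s : Matrix (Fin d) (Fin d) ℂ := hσ.1.sqrt with hsdef
    have hss : s * s = σ := hσ.1.sqrt_mul_self
    have hsh : sᴴ = s := hσ.1.posSemidef_sqrt.1
    have hσh : σᴴ = σ := hσ.1.1
    set B : Matrix (Fin d) (Fin d) ℂ := s * Q * s with hBdef
    have hBpsd : B.PosSemidef := by
      have h0 := hQpsd.mul_mul_conjTranspose_same s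
      rwa [hsh] at h0
    have htrB : B.trace = 1 - z := by
      rw [hBdef, Matrix.trace_mul_cycle, hss, hQdef, Matrix.mul_sub, mul_one,
        Matrix.trace_sub, hσ.2, hzdef, hPdef, Stmt4Aux.trace_mul_P]
    have htrBre : B.trace.re = 1 - z.re := by rw [htrB, Complex.sub_re, Complex.one_re]
    have hb0 := (Stmt4Aux.psd_trace_re hBpsd).2
    constructor
    · rw [htrBre] at hb0; linarith
    · intro hz1
      have hz1' : z = 1 := by
        apply Complex.ext
        · rw [hz1, Complex.one_re]
        · rw [← hzim, Complex.one_im]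
      have hBtr0 : B.trace = 0 := by rw [htrB, hz1', sub_self]
      have hB0 : B = 0 := Stmt4Aux.psd_trace_zero hBpsd hBtr0
      have hQs : Q * s = 0 := by
        apply Matrix.conjTranspose_mul_self_eq_zero.mp
        rw [Matrix.conjTranspose_mul, hsh, hQh]
        calc s * Q * (Q * s) = s * (Q * Q) * s := by simp only [Matrix.mul_assoc]
          _ = B := by rw [hQQ, hBdef]
          _ = 0 := hB0
      have hQσ : Q * σ = 0 := by
        rw [← hss, ← Matrix.mul_assoc, hQs, zero_mul]
      have hPσ : P * σ = σ := by
        have h0 := hQσ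
        rw [hQdef, Matrix.sub_mul, one_mul, sub_eq_zero] at h0
        exact h0.symm
      have hσP : σ * P = σ := by
        have h0 := congrArg Matrix.conjTranspose hPσ
        rwa [Matrix.conjTranspose_mul, hσh, hPh] at h0
      calc σ = P * σ * P := by rw [hPσ, hσP]
        _ = z • P := by rw [hPdef, hzdef]; exact Stmt4Aux.P_sandwich σ
        _ = P := by rw [hz1', one_smul]
  have hPden : IsDensity P := ⟨hPpsd, hPtr⟩
  have hphiP : (star phi ⬝ᵥ P *ᵥ phi) = 1 := by
    rw [hPdef]; exact Stmt4Aux.phi_P_phi hphi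
  have hvalP : traceNorm (((1 : Matrix (Fin m) (Fin m) ℂ) ⊗ₖ matSqrt P) * J *
      ((1 : Matrix (Fin m) (Fin m) ℂ) ⊗ₖ matSqrt P)) = N := by
    rw [part1 P hPden, hphiP]
    simp
  haveI : Nonempty {σ : Matrix (Fin d) (Fin d) ℂ // IsDensity σ} := ⟨⟨P, hPden⟩⟩
  have hbdd : ∀ t : {σ : Matrix (Fin d) (Fin d) ℂ // IsDensity σ},
      traceNorm (((1 : Matrix (Fin m) (Fin m) ℂ) ⊗ₖ matSqrt t.1) * J *
        ((1 : Matrix (Fin m) (Fin m) ℂ) ⊗ₖ matSqrt t.1)) ≤ N := by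
    intro t
    rw [part1 t.1 t.2]
    have h0 := (keyb t.1 t.2).1
    nlinarith [hNpos.le]
  have hdia : diamondNorm Delta = N := by
    unfold diamondNorm
    apply le_antisymm
    · exact ciSup_le hbdd
    · have hb : BddAbove (Set.range fun t : {σ : Matrix (Fin d) (Fin d) ℂ // IsDensity σ} =>
          traceNorm (((1 : Matrix (Fin m) (Fin m) ℂ) ⊗ₖ matSqrt t.1) * J *
            ((1 : Matrix (Fin m) (Fin m) ℂ) ⊗ₖ matSqrt t.1))) := by
        refine ⟨N, ?_⟩
        rintro x ⟨t, rfl⟩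
        exact hbdd t
      have h0 := le_ciSup hb (⟨P, hPden⟩ : {σ : Matrix (Fin d) (Fin d) ℂ // IsDensity σ})
      rw [hvalP] at h0
      exact h0
  refine ⟨part1, hdia, ?_, ?_, ?_⟩
  · rw [hdia]
    unfold MENorm
    rw [← hJdef, ← hNdef]
    have hd' : (d : ℝ) ≠ 0 := Nat.cast_ne_zero.mpr (by omega)
    field_simp
  · rw [hvalP, hdia]
  · intro σ hσ hσne
    rw [part1 σ hσ, hdia]
    have h0 := keyb σ hσ
    have h1' : (star phi ⬝ᵥ σ *ᵥ phi).re < 1 := by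
      rcases lt_or_eq_of_le h0.1 with h' | h'
      · exact h'
      · exact absurd (h0.2 h') hσne
    nlinarith

end
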